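/- Let a, b be integers with 0 < a < b, and let f ∈ ℚ[[X]] be the formal power series with n-th coefficient c_n = 27^n · ((b−a)/(3b))_n ((2b−a)/(3b))_n ((3b−a)/(3b))_n / (((b−a)/b)_n · (n!)²). Then f is annihilated by the third-order differential operator b³x²(1−27x)·D³ + b²x((27a−135b)x − a + 3b)·D² − b((9a² − 63ab + 114b²)x + ab − b²)·D + (a−3b)(a−2b)(a−b); that is, as formal power series, b³X²(1−27X)·f''' + b²X((27a−135b)X − a + 3b)·f'' − b((9a²−63ab+114b²)X + ab − b²)·f' + (a−3b)(a−2b)(a−b)·f = 0, where f', f'', f''' denote formal derivatives. -/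

import Mathlib

open PowerSeries

set_option maxHeartbeats 1600000

/-- The hypergeometric series
`₃F₂([(b-a)/(3b), (2b-a)/(3b), (3b-a)/(3b)], [(b-a)/b, 1], 27X)`
(the diagonal of `(1-x-y)^{a/b}/(1-x-y-z)`, for integers `0 < a < b`) is
annihilated by the third-order operator
`b³x²(1-27x) D³ + b²x((27a-135b)x - a + 3b) D² - b((9a²-63ab+114b²)x + ab - b²) D
 + (a-3b)(a-2b)(a-b)`. -/
theorem hypergeom_annihilated_by_telescoper (a b : ℤ) (ha : 0 < a) (hab : a < b) :
    (fun f : PowerSeries ℚ =>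
      C ((b : ℚ) ^ 3) * X ^ 2 * (1 - 27 * X) * (d⁄dX ℚ (d⁄dX ℚ (d⁄dX ℚ f))) +
        C ((b : ℚ) ^ 2) * X *
          (C (27 * (a : ℚ) - 135 * (b : ℚ)) * X + C (-(a : ℚ) + 3 * (b : ℚ))) *
          (d⁄dX ℚ (d⁄dX ℚ f)) -
        C (b : ℚ) *
          (C (9 * (a : ℚ) ^ 2 - 63 * (a : ℚ) * (b : ℚ) + 114 * (b : ℚ) ^ 2) * X +
            C ((a : ℚ) * (b : ℚ) - (b : ℚ) ^ 2)) * (d⁄dX ℚ f) +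
        C (((a : ℚ) - 3 * (b : ℚ)) * ((a : ℚ) - 2 * (b : ℚ)) * ((a : ℚ) - (b : ℚ))) * f
      = 0)
    (PowerSeries.mk fun n =>
      27 ^ n * (ascPochhammer ℚ n).eval (((b : ℚ) - (a : ℚ)) / (3 * (b : ℚ))) *
          (ascPochhammer ℚ n).eval ((2 * (b : ℚ) - (a : ℚ)) / (3 * (b : ℚ))) *
          (ascPochhammer ℚ n).eval ((3 * (b : ℚ) - (a : ℚ)) / (3 * (b : ℚ))) /
        ((ascPochhammer ℚ n).eval (((b : ℚ) - (a : ℚ)) / (b : ℚ)) *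
          (Nat.factorial n : ℚ) ^ 2)) := by
  set c : ℕ → ℚ := fun n =>
      27 ^ n * (ascPochhammer ℚ n).eval (((b : ℚ) - (a : ℚ)) / (3 * (b : ℚ))) *
          (ascPochhammer ℚ n).eval ((2 * (b : ℚ) - (a : ℚ)) / (3 * (b : ℚ))) *
          (ascPochhammer ℚ n).eval ((3 * (b : ℚ) - (a : ℚ)) / (3 * (b : ℚ))) /
        ((ascPochhammer ℚ n).eval (((b : ℚ) - (a : ℚ)) / (b : ℚ)) *
          (Nat.factorial n : ℚ) ^ 2) with hc
  have hb0 : (0:ℚ) < (b:ℚ) := by exact_mod_cast ha.trans hab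
  have hba : (0:ℚ) < ((b:ℚ) - (a:ℚ)) / (b:ℚ) := by
    apply div_pos _ hb0
    have : (a:ℚ) < (b:ℚ) := by exact_mod_cast hab
    linarith
  have hrec : ∀ n : ℕ,
      (b:ℚ)^2 * ((n:ℚ)+1)^2 * ((b:ℚ)*((n:ℚ)+1) - (a:ℚ)) * c (n+1)
        = (3*(b:ℚ)*(n:ℚ) + (b:ℚ) - (a:ℚ)) * (3*(b:ℚ)*(n:ℚ) + 2*(b:ℚ) - (a:ℚ))
          * (3*(b:ℚ)*(n:ℚ) + 3*(b:ℚ) - (a:ℚ)) * c n := by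
    intro n
    have hQ : (ascPochhammer ℚ n).eval (((b : ℚ) - (a : ℚ)) / (b : ℚ)) ≠ 0 :=
      (ascPochhammer_pos n _ hba).ne'
    have hF : (Nat.factorial n : ℚ) ≠ 0 := by exact_mod_cast (Nat.factorial_pos n).ne'
    have hbne : (b:ℚ) ≠ 0 := hb0.ne'
    have hβ : ((b : ℚ) - (a : ℚ)) / (b : ℚ) + (n:ℚ) ≠ 0 := by positivity
    have hn1 : ((n:ℚ)+1) ≠ 0 := by positivity
    simp only [hc, ascPochhammer_succ_right, Polynomial.eval_mul, Polynomial.eval_add,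
      Polynomial.eval_X, Polynomial.eval_natCast, Nat.factorial_succ, Nat.cast_mul,
      Nat.cast_add, Nat.cast_one]
    set E1 := Polynomial.eval (((b:ℚ) - (a:ℚ)) / (3 * (b:ℚ))) (ascPochhammer ℚ n) with hE1
    set E2 := Polynomial.eval ((2*(b:ℚ) - (a:ℚ)) / (3 * (b:ℚ))) (ascPochhammer ℚ n) with hE2
    set E3 := Polynomial.eval ((3*(b:ℚ) - (a:ℚ)) / (3 * (b:ℚ))) (ascPochhammer ℚ n) with hE3
    set E4 := Polynomial.eval (((b:ℚ) - (a:ℚ)) / (b:ℚ)) (ascPochhammer ℚ n) with hE4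
    rw [mul_div_assoc', mul_div_assoc', div_eq_div_iff (by
        exact mul_ne_zero (mul_ne_zero hQ hβ) (pow_ne_zero 2 (mul_ne_zero hn1 hF)))
      (mul_ne_zero hQ (pow_ne_zero 2 hF))]
    field_simp
    ring
  clear_value c
  clear hc
  ext n
  show (coeff n) _ = (coeff n) 0
  rw [map_zero]
  set f := PowerSeries.mk c
  set q2 : ℚ := 27 * (a : ℚ) - 135 * (b : ℚ) with hq2
  set q3 : ℚ := -(a : ℚ) + 3 * (b : ℚ) with hq3
  set q4 : ℚ := 9 * (a : ℚ) ^ 2 - 63 * (a : ℚ) * (b : ℚ) + 114 * (b : ℚ) ^ 2 with hq4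
  set q5 : ℚ := (a : ℚ) * (b : ℚ) - (b : ℚ) ^ 2 with hq5
  set q6 : ℚ := ((a : ℚ) - 3 * (b : ℚ)) * ((a : ℚ) - 2 * (b : ℚ)) * ((a : ℚ) - (b : ℚ)) with hq6
  have hE : C ((b : ℚ) ^ 3) * X ^ 2 * (1 - 27 * X) * (d⁄dX ℚ (d⁄dX ℚ (d⁄dX ℚ f))) +
        C ((b : ℚ) ^ 2) * X *
          (C q2 * X + C q3) *
          (d⁄dX ℚ (d⁄dX ℚ f)) -
        C (b : ℚ) *
          (C q4 * X +
            C q5) * (d⁄dX ℚ f) +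
        C q6 * f
      = C ((b : ℚ)^3) * (X^2 * (d⁄dX ℚ (d⁄dX ℚ (d⁄dX ℚ f))))
        - 27 * (C ((b : ℚ)^3) * (X^3 * (d⁄dX ℚ (d⁄dX ℚ (d⁄dX ℚ f)))))
        + C ((b : ℚ)^2) * (C q2 * (X^2 * (d⁄dX ℚ (d⁄dX ℚ f))))
        + C ((b : ℚ)^2) * (C q3 * (X^1 * (d⁄dX ℚ (d⁄dX ℚ f))))
        - C (b : ℚ) * (C q4
            * (X^1 * (d⁄dX ℚ f)))
        - C (b : ℚ) * (C q5 * (d⁄dX ℚ f))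
        + C q6 * f := by
    ring
  have h27 : (27 : ℚ⟦X⟧) = C 27 := (map_ofNat C 27).symm
  rw [hE, h27]
  simp only [map_add, map_sub, coeff_C_mul, coeff_X_pow_mul', coeff_derivative, coeff_mk, f]
  rcases n with _ | _ | _ | m
  · norm_num [hq2, hq3, hq4, hq5, hq6]
    linear_combination hrec 0
  · norm_num [hq2, hq3, hq4, hq5, hq6]
    push_cast
    linear_combination hrec 1
  · norm_num [hq2, hq3, hq4, hq5, hq6]
    push_cast
    linear_combination hrec 2
  · have h2 : 2 ≤ m + 3 := by omega
    have h3 : 3 ≤ m + 3 := by omega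
    have h1 : 1 ≤ m + 3 := by omega
    simp only [if_pos h1, if_pos h2, if_pos h3]
    norm_num [hq2, hq3, hq4, hq5, hq6]
    simp only [show m + 1 + 1 + 1 = m + 3 from by omega,
      show m + 1 + 1 + 1 + 1 = m + 4 from by omega, show m + 3 + 1 = m + 4 from by omega]
    push_cast
    linear_combination (norm := (push_cast; ring1)) hrec (m+3)
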